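/- Let Φ denote the standard Gaussian CDF and Φ' its density. For constants c₁ < c₂ and T > 0, define for t ∈ [0,T) and x ∈ ℝ the quantities z₁ = (c₁ - x)/√(T-t), z₂ = (c₂ - x)/√(T-t), and I(x,t) = (1/√(T-t)) · (Φ'(z₁) - Φ'(z₂))² / ((Φ(z₂) - Φ(z₁)) · (Φ(-z₂) + Φ(z₁))). Then there is a constant C such that for all t ∈ [0,T), ∫_ℝ I(x,t) dx ≤ C. -/

import Mathlib

open MeasureTheory Real Set

/-- Standard Gaussian density Φ'. -/
noncomputable def gaussPdf (z : ℝ) : ℝ := (Real.sqrt (2 * Real.pi))⁻¹ * Real.exp (-z ^ 2 / 2)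

/-- Standard Gaussian CDF Φ. -/
noncomputable def gaussCdf (z : ℝ) : ℝ := ∫ u in Set.Iic z, gaussPdf u

/-- The function I(x,t) from the paper. -/
noncomputable def Ifun (c₁ c₂ T x t : ℝ) : ℝ :=
  (Real.sqrt (T - t))⁻¹ *
    (gaussPdf ((c₁ - x) / Real.sqrt (T - t)) - gaussPdf ((c₂ - x) / Real.sqrt (T - t))) ^ 2 /
    ((gaussCdf ((c₂ - x) / Real.sqrt (T - t)) - gaussCdf ((c₁ - x) / Real.sqrt (T - t))) *
      (gaussCdf (-((c₂ - x) / Real.sqrt (T - t))) + gaussCdf ((c₁ - x) / Real.sqrt (T - t))))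

lemma pdf_pos (z : ℝ) : 0 < gaussPdf z := by
  unfold gaussPdf
  positivity

lemma pdf_anti {u v : ℝ} (h : |u| ≤ |v|) : gaussPdf v ≤ gaussPdf u := by
  unfold gaussPdf
  have he : Real.exp (-v ^ 2 / 2) ≤ Real.exp (-u ^ 2 / 2) := by
    apply Real.exp_le_exp.2
    nlinarith [sq_abs u, sq_abs v, abs_nonneg u, mul_self_le_mul_self (abs_nonneg u) h]
  have c0 : (0:ℝ) ≤ (Real.sqrt (2 * Real.pi))⁻¹ := by positivity
  exact mul_le_mul_of_nonneg_left he c0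

lemma pdf_even (z : ℝ) : gaussPdf (-z) = gaussPdf z := by
  unfold gaussPdf
  rw [Even.neg_pow even_two]

lemma pdf_integrable : Integrable gaussPdf := by
  have h := (integrable_exp_neg_mul_sq (b := 2⁻¹) (by norm_num)).const_mul
    (Real.sqrt (2 * Real.pi))⁻¹
  apply h.congr
  filter_upwards with x
  unfold gaussPdf
  rw [show -x ^ 2 / 2 = -2⁻¹ * x ^ 2 from by ring]

lemma cdf_sub_ii (a b : ℝ) : gaussCdf b - gaussCdf a = ∫ x in a..b, gaussPdf x :=
  intervalIntegral.integral_Iic_sub_Iic pdf_integrable.integrableOn pdf_integrable.integrableOn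

lemma cdf_reflect (a b : ℝ) : gaussCdf (-a) - gaussCdf (-b) = gaussCdf b - gaussCdf a := by
  calc gaussCdf (-a) - gaussCdf (-b) = ∫ x in -b..-a, gaussPdf x := cdf_sub_ii _ _
  _ = ∫ x in a..b, gaussPdf (-x) := (intervalIntegral.integral_comp_neg _).symm
  _ = ∫ x in a..b, gaussPdf x := by simp only [pdf_even]
  _ = gaussCdf b - gaussCdf a := (cdf_sub_ii _ _).symm

lemma cdf_sub_ge {a b m : ℝ} (hab : a ≤ b) (hm : ∀ u, a ≤ u → u ≤ b → m ≤ gaussPdf u) :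
    (b - a) * m ≤ gaussCdf b - gaussCdf a := by
  rw [cdf_sub_ii, intervalIntegral.integral_of_le hab]
  have h := setIntegral_ge_of_const_le (measurableSet_Ioc (a := a) (b := b))
    (measure_Ioc_lt_top).ne (fun x hx => hm x hx.1.le hx.2) pdf_integrable.integrableOn
  rw [measureReal_def, Real.volume_Ioc, ENNReal.toReal_ofReal (by linarith), smul_eq_mul] at h
  linarith

lemma cdf_nonneg (z : ℝ) : 0 ≤ gaussCdf z :=
  setIntegral_nonneg measurableSet_Iic fun x _ => (pdf_pos x).le

lemma cdf_le {a b : ℝ} (h : a ≤ b) : gaussCdf a ≤ gaussCdf b := by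
  have h1 := cdf_sub_ge h (m := 0) (fun u _ _ => (pdf_pos u).le)
  rw [mul_zero] at h1
  linarith

lemma cdf_lt {a b : ℝ} (h : a < b) : gaussCdf a < gaussCdf b := by
  have hm : ∀ u, a ≤ u → u ≤ b → gaussPdf (|a| + (b - a)) ≤ gaussPdf u := by
    intro u h1 h2
    apply pdf_anti
    rw [abs_of_nonneg (show (0:ℝ) ≤ |a| + (b - a) by have := abs_nonneg a; linarith)]
    rw [abs_le]
    exact ⟨by linarith [neg_abs_le a], by linarith [le_abs_self a]⟩
  have h1 := cdf_sub_ge h.le hm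
  have h2 := pdf_pos (|a| + (b - a))
  nlinarith

lemma cdf_ge (z : ℝ) : gaussPdf (|z| + 1) ≤ gaussCdf z := by
  have hm : ∀ u, z - 1 ≤ u → u ≤ z → gaussPdf (|z| + 1) ≤ gaussPdf u := by
    intro u hu1 hu2
    apply pdf_anti
    rw [abs_of_nonneg (show (0:ℝ) ≤ |z| + 1 by have := abs_nonneg z; linarith)]
    rw [abs_le]
    exact ⟨by linarith [neg_abs_le z], by linarith [le_abs_self z]⟩
  have h1 := cdf_sub_ge (show z - 1 ≤ z by linarith) hm
  have h2 := cdf_nonneg (z - 1)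
  rw [show z - (z - 1) = 1 by ring, one_mul] at h1
  linarith

lemma cdf_pos (z : ℝ) : 0 < gaussCdf z :=
  lt_of_lt_of_le (pdf_pos _) (cdf_ge z)

lemma denom_pos {z₁ z₂ : ℝ} (h : z₁ < z₂) :
    0 < (gaussCdf z₂ - gaussCdf z₁) * (gaussCdf (-z₂) + gaussCdf z₁) :=
  mul_pos (sub_pos.2 (cdf_lt h)) (add_pos_of_nonneg_of_pos (cdf_nonneg _) (cdf_pos _))

/-- The dominating profile. -/
noncomputable def bfun (b u : ℝ) : ℝ := Real.exp (b * |u| - u ^ 2 / 2)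

lemma bfun_nonneg (b u : ℝ) : 0 ≤ bfun b u := (Real.exp_pos _).le

lemma bfun_neg (b u : ℝ) : bfun b (-u) = bfun b u := by
  unfold bfun
  rw [abs_neg, neg_pow]
  norm_num

/-- The constant in the core bound. -/
noncomputable def Kc (a₀ : ℝ) : ℝ :=
  Real.exp (1 + a₀ ^ 2) * (a₀⁻¹ + Real.sqrt (2 * Real.pi) / ((a₀ / 2) * gaussPdf (a₀ / 2)))

lemma Kc_ge1 {a₀ : ℝ} (ha : 0 < a₀) : Real.exp (1 + a₀ ^ 2) * a₀⁻¹ ≤ Kc a₀ := by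
  unfold Kc
  have hδ : 0 < (a₀ / 2) * gaussPdf (a₀ / 2) := mul_pos (by linarith) (pdf_pos _)
  have h2 : 0 ≤ Real.exp (1 + a₀ ^ 2) *
      (Real.sqrt (2 * Real.pi) / ((a₀ / 2) * gaussPdf (a₀ / 2))) :=
    mul_nonneg (Real.exp_pos _).le (div_nonneg (Real.sqrt_nonneg _) hδ.le)
  nlinarith

lemma Kc_ge2 {a₀ : ℝ} (ha : 0 < a₀) :
    Real.exp (1 + a₀ ^ 2) * (Real.sqrt (2 * Real.pi) / ((a₀ / 2) * gaussPdf (a₀ / 2))) ≤ Kc a₀ := by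
  unfold Kc
  have h2 : 0 ≤ Real.exp (1 + a₀ ^ 2) * a₀⁻¹ :=
    mul_nonneg (Real.exp_pos _).le (by positivity)
  nlinarith

lemma Kc_nonneg {a₀ : ℝ} (ha : 0 < a₀) : 0 ≤ Kc a₀ :=
  le_trans (mul_nonneg (Real.exp_pos _).le (by positivity)) (Kc_ge1 ha)

lemma finishAux {P Q p q K B N : ℝ} (hP : 0 < P) (hQ : 0 < Q) (hp : P ≤ p) (hq : Q ≤ q)
    (hKB : 0 ≤ K * B) (hkey : N ≤ K * B * (P * Q)) : N / (p * q) ≤ K * B := by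
  have hp0 : 0 < p := hP.trans_le hp
  have hq0 : 0 < q := hQ.trans_le hq
  rw [div_le_iff₀ (by positivity)]
  calc N ≤ K * B * (P * Q) := hkey
  _ ≤ K * B * (p * q) := by
      apply mul_le_mul_of_nonneg_left _ hKB
      exact mul_le_mul hp hq hQ.le hp0.le

lemma sqrt_two_pi_ge_one : (1:ℝ) ≤ Real.sqrt (2 * Real.pi) := by
  rw [show (1:ℝ) = Real.sqrt 1 by simp]
  apply Real.sqrt_le_sqrt
  nlinarith [Real.pi_gt_three]

set_option maxHeartbeats 1000000 in
lemma core {a₀ : ℝ} (ha : 0 < a₀) {z₁ z₂ : ℝ} (hz : z₁ + a₀ ≤ z₂) :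
    gaussPdf z₁ ^ 2 / ((gaussCdf z₂ - gaussCdf z₁) * (gaussCdf (-z₂) + gaussCdf z₁))
      ≤ Kc a₀ * bfun (max a₀ 1) z₁ := by
  have hba : a₀ ≤ max a₀ 1 := le_max_left _ _
  have hb1 : (1:ℝ) ≤ max a₀ 1 := le_max_right _ _
  set b := max a₀ 1 with hbdef
  have hKc := Kc_nonneg ha
  have hKB : 0 ≤ Kc a₀ * bfun b z₁ := mul_nonneg hKc (bfun_nonneg _ _)
  have hq1 : gaussPdf 1 ≤ gaussCdf 0 := by
    have := cdf_ge 0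
    simpa using this
  rcases le_or_gt 0 z₁ with hz₁ | hz₁
  · -- Case A : 0 ≤ z₁
    have hm : ∀ u, z₁ ≤ u → u ≤ z₁ + a₀ → gaussPdf (z₁ + a₀) ≤ gaussPdf u := by
      intro u h1 h2
      apply pdf_anti
      rw [abs_of_nonneg (by linarith), abs_of_nonneg (by linarith)]
      linarith
    have h1 := cdf_sub_ge (show z₁ ≤ z₁ + a₀ by linarith) hm
    rw [show z₁ + a₀ - z₁ = a₀ by ring] at h1
    have hp : a₀ * gaussPdf (z₁ + a₀) ≤ gaussCdf z₂ - gaussCdf z₁ := by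
      have := cdf_le hz
      linarith
    have hq : gaussPdf 1 ≤ gaussCdf (-z₂) + gaussCdf z₁ := by
      have h2 := cdf_le hz₁
      have h3 := cdf_nonneg (-z₂)
      linarith
    apply finishAux (mul_pos ha (pdf_pos _)) (pdf_pos 1) hp hq hKB
    have hkey : gaussPdf z₁ ^ 2 ≤ (Real.exp (1 + a₀ ^ 2) * a₀⁻¹) * bfun b z₁ *
        (a₀ * gaussPdf (z₁ + a₀) * gaussPdf 1) := by
      have e1 : gaussPdf z₁ ^ 2 = ((Real.sqrt (2 * Real.pi))⁻¹) ^ 2 *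
          Real.exp (-z₁ ^ 2 / 2 + -z₁ ^ 2 / 2) := by
        simp only [gaussPdf, Real.exp_add]; ring
      have e2 : (Real.exp (1 + a₀ ^ 2) * a₀⁻¹) * bfun b z₁ *
          (a₀ * gaussPdf (z₁ + a₀) * gaussPdf 1) =
          ((Real.sqrt (2 * Real.pi))⁻¹) ^ 2 * ((a₀⁻¹ * a₀) *
          Real.exp ((1 + a₀ ^ 2) + (b * |z₁| - z₁ ^ 2 / 2) + -(z₁ + a₀) ^ 2 / 2 + -1 ^ 2 / 2)) := by
        simp only [bfun, gaussPdf, Real.exp_add]; ring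
      rw [e1, e2, inv_mul_cancel₀ ha.ne', one_mul]
      apply mul_le_mul_of_nonneg_left _ (by positivity)
      apply Real.exp_le_exp.2
      rw [abs_of_nonneg hz₁]
      nlinarith [mul_le_mul_of_nonneg_right hba hz₁, sq_nonneg a₀]
    calc gaussPdf z₁ ^ 2 ≤ (Real.exp (1 + a₀ ^ 2) * a₀⁻¹) * bfun b z₁ *
        (a₀ * gaussPdf (z₁ + a₀) * gaussPdf 1) := hkey
    _ ≤ Kc a₀ * bfun b z₁ * (a₀ * gaussPdf (z₁ + a₀) * gaussPdf 1) := by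
        apply mul_le_mul_of_nonneg_right _
          (mul_nonneg (mul_nonneg ha.le (pdf_pos _).le) (pdf_pos _).le)
        · exact mul_le_mul_of_nonneg_right (Kc_ge1 ha) (bfun_nonneg _ _)
  rcases le_or_gt z₂ 0 with hz₂ | hz₂
  · -- Case B : z₂ ≤ 0
    have hm : ∀ u, z₂ - a₀ ≤ u → u ≤ z₂ → gaussPdf z₁ ≤ gaussPdf u := by
      intro u h1 h2
      apply pdf_anti
      rw [abs_of_nonpos (by linarith), abs_of_nonpos (by linarith)]
      linarith
    have h1 := cdf_sub_ge (show z₂ - a₀ ≤ z₂ by linarith) hm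
    rw [show z₂ - (z₂ - a₀) = a₀ by ring] at h1
    have hp : a₀ * gaussPdf z₁ ≤ gaussCdf z₂ - gaussCdf z₁ := by
      have h2 := cdf_le (show z₁ ≤ z₂ - a₀ by linarith)
      linarith
    have hq : gaussPdf 1 ≤ gaussCdf (-z₂) + gaussCdf z₁ := by
      have h2 := cdf_le (show (0:ℝ) ≤ -z₂ by linarith)
      have h3 := cdf_nonneg z₁
      linarith
    apply finishAux (mul_pos ha (pdf_pos _)) (pdf_pos 1) hp hq hKB
    have hkey : gaussPdf z₁ ^ 2 ≤ (Real.exp (1 + a₀ ^ 2) * a₀⁻¹) * bfun b z₁ *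
        (a₀ * gaussPdf z₁ * gaussPdf 1) := by
      have e1 : gaussPdf z₁ ^ 2 = ((Real.sqrt (2 * Real.pi))⁻¹) ^ 2 *
          Real.exp (-z₁ ^ 2 / 2 + -z₁ ^ 2 / 2) := by
        simp only [gaussPdf, Real.exp_add]; ring
      have e2 : (Real.exp (1 + a₀ ^ 2) * a₀⁻¹) * bfun b z₁ *
          (a₀ * gaussPdf z₁ * gaussPdf 1) =
          ((Real.sqrt (2 * Real.pi))⁻¹) ^ 2 * ((a₀⁻¹ * a₀) *
          Real.exp ((1 + a₀ ^ 2) + (b * |z₁| - z₁ ^ 2 / 2) + -z₁ ^ 2 / 2 + -1 ^ 2 / 2)) := by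
        simp only [bfun, gaussPdf, Real.exp_add]; ring
      rw [e1, e2, inv_mul_cancel₀ ha.ne', one_mul]
      apply mul_le_mul_of_nonneg_left _ (by positivity)
      apply Real.exp_le_exp.2
      nlinarith [mul_nonneg (show (0:ℝ) ≤ b by linarith) (abs_nonneg z₁), sq_nonneg a₀]
    calc gaussPdf z₁ ^ 2 ≤ (Real.exp (1 + a₀ ^ 2) * a₀⁻¹) * bfun b z₁ *
        (a₀ * gaussPdf z₁ * gaussPdf 1) := hkey
    _ ≤ Kc a₀ * bfun b z₁ * (a₀ * gaussPdf z₁ * gaussPdf 1) := by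
        apply mul_le_mul_of_nonneg_right _
          (mul_nonneg (mul_nonneg ha.le (pdf_pos _).le) (pdf_pos _).le)
        · exact mul_le_mul_of_nonneg_right (Kc_ge1 ha) (bfun_nonneg _ _)
  · -- Case C : z₁ < 0 < z₂
    set δ := (a₀ / 2) * gaussPdf (a₀ / 2) with hδdef
    have hδ : 0 < δ := mul_pos (by linarith) (pdf_pos _)
    have hmδ : ∀ u, (0:ℝ) ≤ u → u ≤ a₀ / 2 → gaussPdf (a₀ / 2) ≤ gaussPdf u := by
      intro u h1 h2
      apply pdf_anti
      rw [abs_of_nonneg h1, abs_of_nonneg (by linarith)]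
      linarith
    have hmδ' : ∀ u, -(a₀ / 2) ≤ u → u ≤ (0:ℝ) → gaussPdf (a₀ / 2) ≤ gaussPdf u := by
      intro u h1 h2
      apply pdf_anti
      rw [abs_of_nonneg (show (0:ℝ) ≤ a₀/2 by linarith)]
      rw [abs_le]
      constructor <;> linarith
    have hp : δ ≤ gaussCdf z₂ - gaussCdf z₁ := by
      rcases le_or_gt (a₀ / 2) z₂ with h | h
      · have h1 := cdf_sub_ge (show (0:ℝ) ≤ a₀ / 2 by linarith) hmδ
        rw [show a₀ / 2 - 0 = a₀ / 2 by ring] at h1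
        have h2 := cdf_le h
        have h3 := cdf_le hz₁.le
        rw [hδdef]; linarith
      · have h1 := cdf_sub_ge (show -(a₀ / 2) ≤ (0:ℝ) by linarith) hmδ'
        rw [show (0:ℝ) - -(a₀ / 2) = a₀ / 2 by ring] at h1
        have h2 := cdf_le hz₂.le
        have h3 := cdf_le (show z₁ ≤ -(a₀ / 2) by linarith)
        rw [hδdef]; linarith
    have hq : gaussPdf (|z₁| + 1) ≤ gaussCdf (-z₂) + gaussCdf z₁ := by
      have h2 := cdf_ge z₁
      have h3 := cdf_nonneg (-z₂)
      linarith
    apply finishAux hδ (pdf_pos _) hp hq hKB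
    have hA2 := Kc_ge2 ha
    rw [← hδdef] at hA2
    have hs1 := sqrt_two_pi_ge_one
    have hs0 : (0:ℝ) < Real.sqrt (2 * Real.pi) := lt_of_lt_of_le one_pos hs1
    have hkey : gaussPdf z₁ ^ 2 ≤ (Real.exp (1 + a₀ ^ 2) * (Real.sqrt (2 * Real.pi) / δ)) *
        bfun b z₁ * (δ * gaussPdf (|z₁| + 1)) := by
      have e1 : gaussPdf z₁ ^ 2 = ((Real.sqrt (2 * Real.pi))⁻¹) ^ 2 *
          Real.exp (-z₁ ^ 2 / 2 + -z₁ ^ 2 / 2) := by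
        simp only [gaussPdf, Real.exp_add]; ring
      have e2 : (Real.exp (1 + a₀ ^ 2) * (Real.sqrt (2 * Real.pi) / δ)) * bfun b z₁ *
          (δ * gaussPdf (|z₁| + 1)) =
          (δ⁻¹ * δ) * ((Real.sqrt (2 * Real.pi) * (Real.sqrt (2 * Real.pi))⁻¹) *
          Real.exp ((1 + a₀ ^ 2) + (b * |z₁| - z₁ ^ 2 / 2) + -(|z₁| + 1) ^ 2 / 2)) := by
        simp only [bfun, gaussPdf, Real.exp_add]; ring
      rw [e1, e2, inv_mul_cancel₀ hδ.ne', mul_inv_cancel₀ hs0.ne', one_mul, one_mul]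
      have hcle : ((Real.sqrt (2 * Real.pi))⁻¹) ^ 2 ≤ 1 := by
        have : (Real.sqrt (2 * Real.pi))⁻¹ ≤ 1 := by
          rw [inv_le_one_iff₀]; right; exact hs1
        nlinarith [inv_nonneg.2 hs0.le]
      calc ((Real.sqrt (2 * Real.pi))⁻¹) ^ 2 * Real.exp (-z₁ ^ 2 / 2 + -z₁ ^ 2 / 2)
          ≤ 1 * Real.exp ((1 + a₀ ^ 2) + (b * |z₁| - z₁ ^ 2 / 2) + -(|z₁| + 1) ^ 2 / 2) := by
            apply mul_le_mul hcle _ (Real.exp_pos _).le one_pos.le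
            apply Real.exp_le_exp.2
            nlinarith [sq_abs z₁, mul_nonneg (show (0:ℝ) ≤ b - 1 by linarith) (abs_nonneg z₁),
              sq_nonneg a₀]
      _ = Real.exp ((1 + a₀ ^ 2) + (b * |z₁| - z₁ ^ 2 / 2) + -(|z₁| + 1) ^ 2 / 2) := one_mul _
    calc gaussPdf z₁ ^ 2 ≤ (Real.exp (1 + a₀ ^ 2) * (Real.sqrt (2 * Real.pi) / δ)) *
        bfun b z₁ * (δ * gaussPdf (|z₁| + 1)) := hkey
    _ ≤ Kc a₀ * bfun b z₁ * (δ * gaussPdf (|z₁| + 1)) := by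
        apply mul_le_mul_of_nonneg_right _ (mul_nonneg hδ.le (pdf_pos _).le)
        · exact mul_le_mul_of_nonneg_right hA2 (bfun_nonneg _ _)

lemma core2 {a₀ : ℝ} (ha : 0 < a₀) {z₁ z₂ : ℝ} (hz : z₁ + a₀ ≤ z₂) :
    gaussPdf z₂ ^ 2 / ((gaussCdf z₂ - gaussCdf z₁) * (gaussCdf (-z₂) + gaussCdf z₁))
      ≤ Kc a₀ * bfun (max a₀ 1) z₂ := by
  have h := core ha (z₁ := -z₂) (z₂ := -z₁) (by linarith)
  rw [neg_neg, cdf_reflect, pdf_even, bfun_neg, add_comm (gaussCdf z₁)] at h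
  exact h

lemma core_main {a₀ : ℝ} (ha : 0 < a₀) {z₁ z₂ : ℝ} (hz : z₁ + a₀ ≤ z₂) :
    (gaussPdf z₁ - gaussPdf z₂) ^ 2 /
        ((gaussCdf z₂ - gaussCdf z₁) * (gaussCdf (-z₂) + gaussCdf z₁))
      ≤ 2 * Kc a₀ * bfun (max a₀ 1) z₁ + 2 * Kc a₀ * bfun (max a₀ 1) z₂ := by
  have hD := denom_pos (show z₁ < z₂ by linarith)
  have h1 := core ha hz
  have h2 := core2 ha hz
  have hN : (gaussPdf z₁ - gaussPdf z₂) ^ 2 ≤ 2 * gaussPdf z₁ ^ 2 + 2 * gaussPdf z₂ ^ 2 := by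
    nlinarith [sq_nonneg (gaussPdf z₁ + gaussPdf z₂)]
  calc (gaussPdf z₁ - gaussPdf z₂) ^ 2 /
      ((gaussCdf z₂ - gaussCdf z₁) * (gaussCdf (-z₂) + gaussCdf z₁))
      ≤ (2 * gaussPdf z₁ ^ 2 + 2 * gaussPdf z₂ ^ 2) /
        ((gaussCdf z₂ - gaussCdf z₁) * (gaussCdf (-z₂) + gaussCdf z₁)) := by gcongr
  _ = 2 * (gaussPdf z₁ ^ 2 /
        ((gaussCdf z₂ - gaussCdf z₁) * (gaussCdf (-z₂) + gaussCdf z₁))) +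
      2 * (gaussPdf z₂ ^ 2 /
        ((gaussCdf z₂ - gaussCdf z₁) * (gaussCdf (-z₂) + gaussCdf z₁))) := by ring
  _ ≤ 2 * Kc a₀ * bfun (max a₀ 1) z₁ + 2 * Kc a₀ * bfun (max a₀ 1) z₂ := by linarith

lemma bfun_le (b u : ℝ) : bfun b u ≤ Real.exp (b ^ 2) * Real.exp (-(4:ℝ)⁻¹ * u ^ 2) := by
  unfold bfun
  rw [← Real.exp_add]
  apply Real.exp_le_exp.2
  nlinarith [sq_nonneg (b - |u| / 2), sq_abs u]

set_option maxHeartbeats 1000000 in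
theorem stmt0 (c₁ c₂ T : ℝ) (hc : c₁ < c₂) (hT : 0 < T) :
    ∃ C : ℝ, ∀ t ∈ Set.Ico (0 : ℝ) T, (∫ x : ℝ, Ifun c₁ c₂ T x t) ≤ C := by
  have hcc : (0:ℝ) < c₂ - c₁ := by linarith
  have hsT : 0 < Real.sqrt T := Real.sqrt_pos.2 hT
  set a₀ := (c₂ - c₁) / Real.sqrt T with ha₀def
  have ha₀ : 0 < a₀ := div_pos hcc hsT
  set b := max a₀ 1 with hbdef
  set K := Kc a₀ with hKdef
  have hK : 0 ≤ K := Kc_nonneg ha₀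
  refine ⟨8 * K * Real.exp (b ^ 2) * Real.sqrt Real.pi, ?_⟩
  rintro t ⟨ht0, htT⟩
  set s := Real.sqrt (T - t) with hsdef
  have hs0 : 0 < s := Real.sqrt_pos.2 (by linarith)
  have hss : s ≤ Real.sqrt T := Real.sqrt_le_sqrt (by linarith)
  have haa : a₀ ≤ (c₂ - c₁) / s := by
    rw [ha₀def]
    gcongr
  have hgap : ∀ x : ℝ, (c₁ - x) / s + a₀ ≤ (c₂ - x) / s := by
    intro x
    have h1 : (c₂ - x) / s - (c₁ - x) / s = (c₂ - c₁) / s := by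
      rw [div_sub_div_same]
      ring_nf
    linarith
  set k := (4 * s ^ 2)⁻¹ with hkdef
  have hk : (0:ℝ) < k := by rw [hkdef]; positivity
  set A := s⁻¹ * (2 * K * Real.exp (b ^ 2)) with hAdef
  have hsinv : (0:ℝ) ≤ s⁻¹ := inv_nonneg.2 hs0.le
  have h2K : (0:ℝ) ≤ 2 * K := by linarith
  have hpt : ∀ x : ℝ, Ifun c₁ c₂ T x t ≤
      A * (Real.exp (-k * (x - c₁) ^ 2) + Real.exp (-k * (x - c₂) ^ 2)) := by
    intro x
    have hmain := core_main ha₀ (hgap x)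
    have hb1 := bfun_le b ((c₁ - x) / s)
    have hb2 := bfun_le b ((c₂ - x) / s)
    have he1 : Real.exp (-(4:ℝ)⁻¹ * ((c₁ - x) / s) ^ 2) = Real.exp (-k * (x - c₁) ^ 2) := by
      congr 1
      rw [hkdef]
      field_simp
      ring
    have he2 : Real.exp (-(4:ℝ)⁻¹ * ((c₂ - x) / s) ^ 2) = Real.exp (-k * (x - c₂) ^ 2) := by
      congr 1
      rw [hkdef]
      field_simp
      ring
    rw [he1] at hb1
    rw [he2] at hb2
    unfold Ifun
    rw [← hsdef, mul_div_assoc]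
    calc s⁻¹ * ((gaussPdf ((c₁ - x) / s) - gaussPdf ((c₂ - x) / s)) ^ 2 /
          ((gaussCdf ((c₂ - x) / s) - gaussCdf ((c₁ - x) / s)) *
            (gaussCdf (-((c₂ - x) / s)) + gaussCdf ((c₁ - x) / s))))
        ≤ s⁻¹ * (2 * K * bfun b ((c₁ - x) / s) + 2 * K * bfun b ((c₂ - x) / s)) :=
          mul_le_mul_of_nonneg_left hmain hsinv
    _ ≤ s⁻¹ * (2 * K * (Real.exp (b ^ 2) * Real.exp (-k * (x - c₁) ^ 2)) +
          2 * K * (Real.exp (b ^ 2) * Real.exp (-k * (x - c₂) ^ 2))) := by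
        apply mul_le_mul_of_nonneg_left _ hsinv
        exact add_le_add (mul_le_mul_of_nonneg_left hb1 h2K)
          (mul_le_mul_of_nonneg_left hb2 h2K)
    _ = A * (Real.exp (-k * (x - c₁) ^ 2) + Real.exp (-k * (x - c₂) ^ 2)) := by
        rw [hAdef]; ring
  have hnn : ∀ x : ℝ, 0 ≤ Ifun c₁ c₂ T x t := by
    intro x
    have hD := denom_pos (show (c₁ - x) / s < (c₂ - x) / s by
      have := hgap x; linarith)
    unfold Ifun
    rw [← hsdef]
    exact div_nonneg (mul_nonneg hsinv (sq_nonneg _)) hD.le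
  have hint1 : Integrable (fun x : ℝ => Real.exp (-k * (x - c₁) ^ 2)) :=
    (integrable_exp_neg_mul_sq hk).comp_sub_right c₁
  have hint2 : Integrable (fun x : ℝ => Real.exp (-k * (x - c₂) ^ 2)) :=
    (integrable_exp_neg_mul_sq hk).comp_sub_right c₂
  have hGint : Integrable (fun x : ℝ =>
      A * (Real.exp (-k * (x - c₁) ^ 2) + Real.exp (-k * (x - c₂) ^ 2))) :=
    (hint1.add hint2).const_mul A
  have hI1 : (∫ x : ℝ, Real.exp (-k * (x - c₁) ^ 2)) = Real.sqrt (Real.pi / k) := by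
    rw [← integral_gaussian k]
    exact integral_sub_right_eq_self (fun y => Real.exp (-k * y ^ 2)) c₁
  have hI2 : (∫ x : ℝ, Real.exp (-k * (x - c₂) ^ 2)) = Real.sqrt (Real.pi / k) := by
    rw [← integral_gaussian k]
    exact integral_sub_right_eq_self (fun y => Real.exp (-k * y ^ 2)) c₂
  have hsq : Real.sqrt (Real.pi / k) = 2 * s * Real.sqrt Real.pi := by
    rw [hkdef, show Real.pi / (4 * s ^ 2)⁻¹ = (2 * s) ^ 2 * Real.pi by
      field_simp; ring]
    rw [Real.sqrt_mul (sq_nonneg _), Real.sqrt_sq (by linarith)]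
  calc (∫ x : ℝ, Ifun c₁ c₂ T x t)
      ≤ ∫ x : ℝ, A * (Real.exp (-k * (x - c₁) ^ 2) + Real.exp (-k * (x - c₂) ^ 2)) :=
        integral_mono_of_nonneg (Filter.Eventually.of_forall hnn) hGint
          (Filter.Eventually.of_forall hpt)
  _ = A * (Real.sqrt (Real.pi / k) + Real.sqrt (Real.pi / k)) := by
        rw [integral_const_mul, integral_add hint1 hint2, hI1, hI2]
  _ = 8 * K * Real.exp (b ^ 2) * Real.sqrt Real.pi := by
        rw [hsq, hAdef]
        field_simp
        ring
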